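/- Let Π be a profinite group, N ⊆ Π an open normal subgroup of index d, ℓ > d a prime, and T a finitely generated free ℤ_ℓ-module with a continuous Π-action such that (T/ℓT)^N = (T/ℓT)^Π. Then, setting M = T ⊗ ℚ_ℓ/ℤ_ℓ, one has M^N = M^Π. -/

import Mathlib

/-- Let `Γ` be a profinite group, `N ⊆ Γ` an open normal subgroup of index `d`,
`ℓ > d` a prime, and `T` a finitely generated free `ℤ_ℓ`-module with a continuous `Γ`-action
such that `(T/ℓT)^N = (T/ℓT)^Γ`. Then, setting `M = T ⊗ ℚ_ℓ/ℤ_ℓ`, one has `M^N = M^Γ`.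

Here `T` is realized as the unit-ball lattice `{v : ℚ_ℓ^r | ∀ i, ‖v i‖ ≤ 1}` inside
`V = ℚ_ℓ^r`, with `ρ` a continuous action on `V` stabilizing the lattice; `M = V/T`, and
invariance of the class of `v` in `M` under `g` is expressed, quotient-freely, as
`ρ g v - v ∈ T`. -/
theorem divisible_invariants_eq_of_invariants_mod_ell
    (ℓ d r : ℕ) [Fact ℓ.Prime] (hℓd : d < ℓ)
    (Γ : Type*) [Group Γ] [TopologicalSpace Γ] [IsTopologicalGroup Γ]
    [CompactSpace Γ] [TotallyDisconnectedSpace Γ]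
    (N : Subgroup Γ) [N.Normal] (hNopen : IsOpen (N : Set Γ)) (hNd : N.index = d)
    (ρ : Representation ℚ_[ℓ] Γ (Fin r → ℚ_[ℓ]))
    (hcont : Continuous fun p : Γ × (Fin r → ℚ_[ℓ]) => ρ p.1 p.2)
    (hlat : ∀ (g : Γ) (x : Fin r → ℚ_[ℓ]), (∀ i, ‖x i‖ ≤ 1) → ∀ i, ‖ρ g x i‖ ≤ 1)
    (hmodℓ : ∀ x : Fin r → ℚ_[ℓ], (∀ i, ‖x i‖ ≤ 1) →
      (∀ g ∈ N, ∀ i, ‖(ρ g x - x) i‖ ≤ ((ℓ : ℝ))⁻¹) →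
      ∀ g : Γ, ∀ i, ‖(ρ g x - x) i‖ ≤ ((ℓ : ℝ))⁻¹) :
    ∀ v : Fin r → ℚ_[ℓ],
      (∀ g ∈ N, ∀ i, ‖(ρ g v - v) i‖ ≤ 1) →
      ∀ g : Γ, ∀ i, ‖(ρ g v - v) i‖ ≤ 1 := by
  -- basic numerical facts
  have hℓ1 : (1 : ℝ) < (ℓ : ℝ) := by
    exact_mod_cast (Fact.out : ℓ.Prime).one_lt
  have hℓ0 : (0 : ℝ) < (ℓ : ℝ) := lt_trans one_pos hℓ1
  have hℓnorm : ‖(ℓ : ℚ_[ℓ])‖ = ((ℓ : ℝ))⁻¹ := Padic.norm_p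
  -- the index is finite and nonzero
  have hfin : Finite (Γ ⧸ N) := Subgroup.quotient_finite_of_isOpen N hNopen
  have hd0 : d ≠ 0 := hNd ▸ Subgroup.index_ne_zero_of_finite
  -- the norm of d in ℚ_ℓ is 1
  have hdnorm : ‖((d : ℚ_[ℓ]))‖ = 1 := by
    have h1 : ‖((d : ℤ) : ℚ_[ℓ])‖ ≤ 1 := Padic.norm_int_le_one _
    have h2 : ¬ ‖((d : ℤ) : ℚ_[ℓ])‖ < 1 := by
      rw [Padic.norm_intCast_lt_one_iff]
      intro hdvd
      have hle : (ℓ : ℤ) ≤ (d : ℤ) :=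
        Int.le_of_dvd (by exact_mod_cast Nat.pos_of_ne_zero hd0) hdvd
      have : ℓ ≤ d := by exact_mod_cast hle
      omega
    have h3 := le_antisymm h1 (not_lt.mp h2)
    simpa using h3
  -- ultrametric inequality for subtraction
  have hmax : ∀ a b : ℚ_[ℓ], ‖a - b‖ ≤ max ‖a‖ ‖b‖ := by
    intro a b
    simpa [sub_eq_add_neg] using Padic.nonarchimedean a (-b)
  intro v hvN
  -- bound the denominators of v
  obtain ⟨n, hn⟩ : ∃ n : ℕ, ∀ i, ‖v i‖ ≤ (ℓ : ℝ) ^ n := by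
    obtain ⟨n, hn⟩ := pow_unbounded_of_one_lt ‖v‖ hℓ1
    exact ⟨n, fun i => (norm_le_pi_norm v i).trans hn.le⟩
  induction n generalizing v with
  | zero =>
    intro g i
    have h1 : ‖ρ g v i‖ ≤ 1 := hlat g v (by simpa using hn) i
    have h2 : ‖v i‖ ≤ 1 := by simpa using hn i
    calc ‖(ρ g v - v) i‖ = ‖ρ g v i - v i‖ := by simp [Pi.sub_apply]
    _ ≤ max ‖ρ g v i‖ ‖v i‖ := hmax _ _
    _ ≤ 1 := max_le h1 h2
  | succ n ih =>
    -- the cocycle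
    set E : Γ → (Fin r → ℚ_[ℓ]) := fun g => ρ g v - v with hE
    have hcoc : ∀ g h : Γ, E (g * h) = ρ g (E h) + E g := by
      intro g h
      show ρ (g * h) v - v = ρ g (ρ h v - v) + (ρ g v - v)
      rw [map_mul, Module.End.mul_apply, map_sub]
      abel
    -- scaled norm computation
    have hsc : ∀ (x : Fin r → ℚ_[ℓ]) (i : Fin r),
        ‖((ℓ : ℚ_[ℓ]) • x) i‖ = ((ℓ : ℝ))⁻¹ * ‖x i‖ := by
      intro x i
      simp [Pi.smul_apply, norm_smul, hℓnorm]
    have hsmul : ∀ (h : Γ) (x : Fin r → ℚ_[ℓ]),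
        ρ h ((ℓ : ℚ_[ℓ]) • x) - (ℓ : ℚ_[ℓ]) • x = (ℓ : ℚ_[ℓ]) • (ρ h x - x) := by
      intro h x
      rw [map_smul, ← smul_sub]
    -- Step 1: from the induction hypothesis applied to ℓ • v, ‖E g i‖ ≤ ℓ for all g
    have hsmall : ∀ g : Γ, ∀ i, ‖E g i‖ ≤ (ℓ : ℝ) := by
      have key := ih ((ℓ : ℚ_[ℓ]) • v)
        (by
          intro g hg i
          rw [hsmul, hsc]
          have h1 := hvN g hg i
          have h2 : ((ℓ : ℝ))⁻¹ ≤ 1 := inv_le_one_of_one_le₀ hℓ1.le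
          nlinarith [norm_nonneg ((ρ g v - v) i), inv_nonneg.mpr hℓ0.le])
        (by
          intro i
          rw [hsc]
          have h1 := hn i
          have : ((ℓ : ℝ))⁻¹ * ‖v i‖ ≤ ((ℓ : ℝ))⁻¹ * (ℓ : ℝ) ^ (n + 1) :=
            mul_le_mul_of_nonneg_left h1 (inv_nonneg.mpr hℓ0.le)
          calc ((ℓ : ℝ))⁻¹ * ‖v i‖ ≤ ((ℓ : ℝ))⁻¹ * (ℓ : ℝ) ^ (n + 1) := this
          _ = (ℓ : ℝ) ^ n := by
              rw [pow_succ, mul_comm ((ℓ:ℝ) ^ n), ← mul_assoc,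
                inv_mul_cancel₀ hℓ0.ne', one_mul])
      intro g i
      have hk := key g i
      rw [hsmul, hsc] at hk
      calc ‖E g i‖ = (ℓ : ℝ) * (((ℓ : ℝ))⁻¹ * ‖(ρ g v - v) i‖) := by
            rw [← mul_assoc, mul_inv_cancel₀ hℓ0.ne', one_mul]
      _ ≤ (ℓ : ℝ) * 1 := mul_le_mul_of_nonneg_left hk hℓ0.le
      _ = (ℓ : ℝ) := mul_one _
    -- Step 2: E g is N-invariant mod T
    have hAN : ∀ g : Γ, ∀ h ∈ N, ∀ i, ‖(ρ h (E g) - E g) i‖ ≤ 1 := by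
      intro g h hh i
      have hk : g⁻¹ * h * g ∈ N := Subgroup.Normal.conj_mem' ‹N.Normal› h hh g
      have e1 : E (h * g) = ρ h (E g) + E h := hcoc h g
      have e2 : E (g * (g⁻¹ * h * g)) = ρ g (E (g⁻¹ * h * g)) + E g := hcoc g _
      have e3 : h * g = g * (g⁻¹ * h * g) := by group
      rw [e3, e2] at e1
      have hid : ρ h (E g) - E g = ρ g (E (g⁻¹ * h * g)) - E h := by
        rw [sub_eq_sub_iff_add_eq_add]
        exact e1.symm
      rw [hid]
      have h1 : ∀ j, ‖ρ g (E (g⁻¹ * h * g)) j‖ ≤ 1 :=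
        hlat g _ (fun j => hvN _ hk j)
      have h2 : ‖E h i‖ ≤ 1 := hvN h hh i
      calc ‖(ρ g (E (g⁻¹ * h * g)) - E h) i‖
          = ‖ρ g (E (g⁻¹ * h * g)) i - E h i‖ := by simp [Pi.sub_apply]
      _ ≤ max ‖ρ g (E (g⁻¹ * h * g)) i‖ ‖E h i‖ := hmax _ _
      _ ≤ 1 := max_le (h1 i) h2
    -- Step 3: E g is Γ-invariant mod T, via hmodℓ applied to ℓ • E g
    have hA : ∀ g h : Γ, ∀ i, ‖(ρ h (E g) - E g) i‖ ≤ 1 := by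
      intro g h i
      have key := hmodℓ ((ℓ : ℚ_[ℓ]) • E g)
        (by
          intro i
          rw [hsc]
          calc ((ℓ : ℝ))⁻¹ * ‖E g i‖ ≤ ((ℓ : ℝ))⁻¹ * (ℓ : ℝ) :=
                mul_le_mul_of_nonneg_left (hsmall g i) (inv_nonneg.mpr hℓ0.le)
          _ = 1 := inv_mul_cancel₀ hℓ0.ne')
        (by
          intro h hh i
          rw [hsmul, hsc]
          calc ((ℓ : ℝ))⁻¹ * ‖(ρ h (E g) - E g) i‖ ≤ ((ℓ : ℝ))⁻¹ * 1 :=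
                mul_le_mul_of_nonneg_left (hAN g h hh i) (inv_nonneg.mpr hℓ0.le)
          _ = ((ℓ : ℝ))⁻¹ := mul_one _)
        h i
      rw [hsmul, hsc] at key
      calc ‖(ρ h (E g) - E g) i‖
          = (ℓ : ℝ) * (((ℓ : ℝ))⁻¹ * ‖(ρ h (E g) - E g) i‖) := by
            rw [← mul_assoc, mul_inv_cancel₀ hℓ0.ne', one_mul]
      _ ≤ (ℓ : ℝ) * ((ℓ : ℝ))⁻¹ := mul_le_mul_of_nonneg_left key hℓ0.le
      _ = 1 := mul_inv_cancel₀ hℓ0.ne'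
    -- Step 4: E is a homomorphism mod T
    have hB : ∀ g h : Γ, ∀ i, ‖(E (g * h) - E g - E h) i‖ ≤ 1 := by
      intro g h i
      have : E (g * h) - E g - E h = ρ g (E h) - E h := by
        rw [hcoc g h]; abel
      rw [this]
      exact hA h g i
    -- Step 5: powers
    have hC : ∀ g : Γ, ∀ k : ℕ, ∀ i, ‖(E (g ^ k) - (k : ℚ_[ℓ]) • E g) i‖ ≤ 1 := by
      intro g k
      induction k with
      | zero =>
        intro i
        have h0 : E (g ^ 0) = 0 := by
          show ρ (g ^ 0) v - v = 0
          rw [pow_zero, map_one]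
          show v - v = 0
          exact sub_self v
        rw [h0]
        simp
      | succ k ihk =>
        intro i
        have hsplit : E (g ^ (k + 1)) - ((k + 1 : ℕ) : ℚ_[ℓ]) • E g
            = (E (g ^ k * g) - E (g ^ k) - E g) + (E (g ^ k) - (k : ℚ_[ℓ]) • E g) := by
          rw [pow_succ]
          push_cast
          rw [add_smul, one_smul]
          abel
        rw [hsplit]
        calc ‖((E (g ^ k * g) - E (g ^ k) - E g) + (E (g ^ k) - (k : ℚ_[ℓ]) • E g)) i‖
            = ‖(E (g ^ k * g) - E (g ^ k) - E g) i + (E (g ^ k) - (k : ℚ_[ℓ]) • E g) i‖ := by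
              simp [Pi.add_apply]
        _ ≤ max ‖(E (g ^ k * g) - E (g ^ k) - E g) i‖ ‖(E (g ^ k) - (k : ℚ_[ℓ]) • E g) i‖ :=
              Padic.nonarchimedean _ _
        _ ≤ 1 := max_le (hB (g ^ k) g i) (ihk i)
    -- Step 6: conclude using g ^ d ∈ N and ‖d‖ = 1
    intro g i
    have hgd : g ^ d ∈ N := hNd ▸ N.pow_index_mem g
    have h1 : ‖E (g ^ d) i‖ ≤ 1 := hvN _ hgd i
    have h2 : ‖((d : ℚ_[ℓ]) • E g) i‖ ≤ 1 := by
      have hsplit : ((d : ℚ_[ℓ]) • E g) i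
          = E (g ^ d) i - (E (g ^ d) - (d : ℚ_[ℓ]) • E g) i := by
        simp [Pi.sub_apply]
      rw [hsplit]
      exact le_trans (hmax _ _) (max_le h1 (hC g d i))
    have h3 : ‖((d : ℚ_[ℓ]) • E g) i‖ = ‖E g i‖ := by
      simp [Pi.smul_apply, norm_smul, hdnorm]
    rw [h3] at h2
    exact h2
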